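/- Suppose Σ_{i=0}^∞ a_i 3^i = Σ_{i=0}^∞ b_i 3^i as 3-adic integers, with a_i ∈ {0, ±1} and b_i ∈ {0,1,2}. Then for every t: b_t ≡ a_t + Σ_{0 ≤ λ < t} a_λ(a_λ - 1) · Π_{λ < i < t} (1 - a_i²) (mod 3). -/

import Mathlib

open Finset

lemma summable_aux (f : ℕ → ℤ_[3]) : Summable (fun i => f i * 3 ^ i) := by
  apply Summable.of_norm_bounded (g := fun i => (1/3 : ℝ) ^ i)
    (summable_geometric_of_lt_one (by norm_num) (by norm_num))
  intro i
  calc ‖f i * 3 ^ i‖ ≤ ‖f i‖ * ‖(3:ℤ_[3]) ^ i‖ := norm_mul_le _ _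
    _ ≤ 1 * (1/3:ℝ)^i := by
        apply mul_le_mul (PadicInt.norm_le_one _) ?_ (norm_nonneg _) zero_le_one
        have h1 : ‖(3:ℤ_[3]) ^ i‖ = (3:ℝ)^(-i : ℤ) := by
          have := PadicInt.norm_p_pow (p := 3) i
          simpa using this
        rw [h1, zpow_neg, zpow_natCast, one_div, inv_pow]
    _ = (1/3:ℝ)^i := one_mul _

lemma dvd_diff (a : ℕ → ℤ) (b : ℕ → ℕ)
    (heq : (∑' i : ℕ, (a i : ℤ_[3]) * 3 ^ i) = ∑' i : ℕ, (b i : ℤ_[3]) * 3 ^ i) (N : ℕ) :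
    (3:ℤ)^N ∣ (∑ i ∈ range N, a i * 3^i - ∑ i ∈ range N, (b i:ℤ) * 3^i) := by
  have hsa := summable_aux (fun i => (a i : ℤ_[3]))
  have hsb := summable_aux (fun i => (b i : ℤ_[3]))
  have hsa' := summable_aux (fun i => (a (i+N) : ℤ_[3]))
  have hsb' := summable_aux (fun i => (b (i+N) : ℤ_[3]))
  have ta := Summable.sum_add_tsum_nat_add N hsa
  have tb := Summable.sum_add_tsum_nat_add N hsb
  have ea : ∑' (i:ℕ), (a (i+N) : ℤ_[3]) * 3^(i+N)
      = (3:ℤ_[3])^N * ∑' i, (a (i+N) : ℤ_[3]) * 3^i := by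
    rw [← Summable.tsum_mul_left _ hsa']
    congr 1; funext i; ring
  have eb : ∑' (i:ℕ), (b (i+N) : ℤ_[3]) * 3^(i+N)
      = (3:ℤ_[3])^N * ∑' i, (b (i+N) : ℤ_[3]) * 3^i := by
    rw [← Summable.tsum_mul_left _ hsb']
    congr 1; funext i; ring
  have key : ((∑ i ∈ range N, a i * 3^i - ∑ i ∈ range N, (b i:ℤ) * 3^i : ℤ) : ℤ_[3])
      = (3:ℤ_[3])^N * (∑' i, (b (i+N) : ℤ_[3]) * 3^i - ∑' i, (a (i+N) : ℤ_[3]) * 3^i) := by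
    have expand : ((∑ i ∈ range N, a i * 3^i - ∑ i ∈ range N, (b i:ℤ) * 3^i : ℤ) : ℤ_[3])
        = (∑ i ∈ range N, (a i : ℤ_[3]) * 3^i) - ∑ i ∈ range N, (b i : ℤ_[3]) * 3^i := by
      push_cast; ring
    rw [expand]
    rw [show (∑ i ∈ range N, (a i : ℤ_[3]) * 3^i)
        = (∑' i : ℕ, (a i : ℤ_[3]) * 3 ^ i) - ∑' (i:ℕ), (a (i+N) : ℤ_[3]) * 3^(i+N) by
      rw [← ta]; ring]
    rw [show (∑ i ∈ range N, (b i : ℤ_[3]) * 3^i)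
        = (∑' i : ℕ, (b i : ℤ_[3]) * 3 ^ i) - ∑' (i:ℕ), (b (i+N) : ℤ_[3]) * 3^(i+N) by
      rw [← tb]; ring]
    rw [heq, ea, eb]; ring
  have hnorm : ‖((∑ i ∈ range N, a i * 3^i - ∑ i ∈ range N, (b i:ℤ) * 3^i : ℤ) : ℤ_[3])‖
      ≤ (3:ℝ)^(-N:ℤ) := by
    rw [key]
    calc ‖(3:ℤ_[3])^N * _‖ ≤ ‖(3:ℤ_[3])^N‖ * ‖(∑' i, (b (i+N) : ℤ_[3]) * 3^i - ∑' i, (a (i+N) : ℤ_[3]) * 3^i)‖ := norm_mul_le _ _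
      _ ≤ (3:ℝ)^(-N:ℤ) * 1 := by
          apply mul_le_mul ?_ (PadicInt.norm_le_one _) (norm_nonneg _) (by positivity)
          have := PadicInt.norm_p_pow (p := 3) N
          simp at this ⊢
          rw [this]
      _ = (3:ℝ)^(-N:ℤ) := mul_one _
  have := (PadicInt.norm_int_le_pow_iff_dvd (p := 3)
    (k := (∑ i ∈ range N, a i * 3^i - ∑ i ∈ range N, (b i:ℤ) * 3^i)) (n := N)).mp (by exact_mod_cast hnorm)
  exact_mod_cast this

lemma geom3 (N : ℕ) : 2 * ∑ i ∈ range N, (3:ℤ)^i = 3^N - 1 := by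
  induction N with
  | zero => simp
  | succ n ih => rw [Finset.sum_range_succ, mul_add, ih, pow_succ]; ring

/-- Balanced to standard ternary digit transformation. -/
theorem balanced_to_standard_ternary (a : ℕ → ℤ) (b : ℕ → ℕ)
    (ha : ∀ i, |a i| ≤ 1) (hb : ∀ i, b i < 3)
    (heq : (∑' i : ℕ, (a i : ℤ_[3]) * 3 ^ i) = ∑' i : ℕ, (b i : ℤ_[3]) * 3 ^ i) :
    ∀ t, (b t : ZMod 3) = (a t : ZMod 3) +
      ∑ l ∈ Finset.range t,
        (a l : ZMod 3) * ((a l : ZMod 3) - 1) *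
          ∏ i ∈ Finset.Ioo l t, (1 - (a i : ZMod 3) ^ 2) := by
  set Sa : ℕ → ℤ := fun N => ∑ i ∈ range N, a i * 3^i with hSa
  set Sb : ℕ → ℤ := fun N => ∑ i ∈ range N, (b i:ℤ) * 3^i with hSb
  set c : ℕ → ℤ := fun N => (Sa N - Sb N) / 3^N with hcdef
  have hc : ∀ N, 3^N * c N = Sa N - Sb N := fun N =>
    Int.mul_ediv_cancel' (dvd_diff a b heq N)
  -- bounds on c
  have hcr : ∀ N, c N = 0 ∨ c N = -1 := by
    intro N
    have h1 := hc N
    have hG := geom3 N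
    have hSa_le : |Sa N| ≤ ∑ i ∈ range N, (3:ℤ)^i := by
      refine (Finset.abs_sum_le_sum_abs _ _).trans ?_
      apply Finset.sum_le_sum
      intro i _
      rw [abs_mul, abs_pow]
      calc |a i| * |(3:ℤ)|^i ≤ 1 * |(3:ℤ)|^i := by
            apply mul_le_mul_of_nonneg_right (ha i) (by positivity)
        _ = 3^i := by norm_num
    have hSb_nonneg : 0 ≤ Sb N := by
      apply Finset.sum_nonneg; intro i _; positivity
    have hSb_le : Sb N ≤ 2 * ∑ i ∈ range N, (3:ℤ)^i := by
      rw [Finset.mul_sum]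
      apply Finset.sum_le_sum
      intro i _
      have : (b i : ℤ) ≤ 2 := by have := hb i; omega
      nlinarith [pow_pos (by norm_num : (0:ℤ) < 3) i]
    have habs := abs_le.mp hSa_le
    have hpow : (0:ℤ) < 3^N := pow_pos (by norm_num) N
    rcases le_or_gt (c N) (-2) with h | h
    · exfalso; nlinarith
    rcases le_or_gt 1 (c N) with h2 | h2
    · exfalso; nlinarith
    omega
  have hc0 : c 0 = 0 := by have := hc 0; simp [hSa, hSb] at this; omega
  -- recursion
  have hrec : ∀ t, 3 * c (t+1) = c t + a t - (b t : ℤ) := by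
    intro t
    have h1 := hc (t+1)
    have h2 := hc t
    have e1 : Sa (t+1) = Sa t + a t * 3^t := by simp [hSa, Finset.sum_range_succ]
    have e2 : Sb (t+1) = Sb t + (b t:ℤ) * 3^t := by simp [hSb, Finset.sum_range_succ]
    rw [e1, e2] at h1
    have key : 3^t * (3 * c (t+1)) = 3^t * (c t + a t - (b t:ℤ)) := by
      linear_combination h1 - h2
    exact mul_left_cancel₀ (show (3:ℤ)^t ≠ 0 by positivity) key
  -- b in ZMod 3
  have hbz : ∀ t, (b t : ZMod 3) = (a t : ZMod 3) + (c t : ZMod 3) := by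
    intro t
    have h := hrec t
    have : (b t : ℤ) = a t + c t - 3 * c (t+1) := by omega
    calc (b t : ZMod 3) = ((b t : ℤ) : ZMod 3) := by push_cast; ring
      _ = ((a t + c t - 3 * c (t+1) : ℤ) : ZMod 3) := by rw [← this]
      _ = (a t : ZMod 3) + (c t : ZMod 3) := by
          push_cast
          rw [show ((3:ZMod 3)) = 0 by decide]
          ring
  -- carry recursion in ZMod 3
  have hcz : ∀ t, ((c (t+1) : ℤ) : ZMod 3)
      = (a t : ZMod 3) * ((a t : ZMod 3) - 1) + (1 - (a t : ZMod 3)^2) * ((c t : ℤ) : ZMod 3) := by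
    intro t
    have h := hrec t
    have hat : a t = -1 ∨ a t = 0 ∨ a t = 1 := by have := abs_le.mp (ha t); omega
    have hbt : (b t : ℤ) = 0 ∨ (b t : ℤ) = 1 ∨ (b t : ℤ) = 2 := by have := hb t; omega
    rcases hcr t with h0 | h0 <;> rcases hcr (t+1) with h1 | h1 <;>
      rcases hat with h2 | h2 | h2 <;>
      rw [h0, h1, h2] at h ⊢ <;> first
      | (exfalso; omega)
      | (push_cast; decide)
  -- carry equals the sum, by induction
  have hsum : ∀ t, ((c t : ℤ) : ZMod 3)
      = ∑ l ∈ Finset.range t, (a l : ZMod 3) * ((a l : ZMod 3) - 1) *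
          ∏ i ∈ Finset.Ioo l t, (1 - (a i : ZMod 3) ^ 2) := by
    intro t
    induction t with
    | zero => simp [hc0]
    | succ n ih =>
      rw [hcz n, ih, Finset.sum_range_succ]
      have hIoo : Finset.Ioo n (n+1) = (∅ : Finset ℕ) := by
        ext x; simp
      rw [hIoo]
      simp only [Finset.prod_empty, mul_one]
      rw [add_comm]
      congr 1
      rw [Finset.mul_sum]
      apply Finset.sum_congr rfl
      intro l hl
      have hln : l < n := Finset.mem_range.mp hl
      have hins : Finset.Ioo l (n+1) = insert n (Finset.Ioo l n) := by
        ext x; simp only [Finset.mem_Ioo, Finset.mem_insert]; omega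
      rw [hins, Finset.prod_insert (by simp)]
      ring
  intro t
  rw [hbz t, hsum t]
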